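/- arXiv:0901.1322 — 5 statements merged into one kernel-verified Lean document; each statement's English description precedes it below -/
import Mathlib

section
/- The order function Ord, regarded as a function of the four endpoints of the two oriented segments (a map (ℝ²)⁴ → ℝ), is continuous at every pair of segments (e₁, e₂) that do not intersect at a point lying in the relative interior of both segments. -/
open MeasureTheory Filter Topology Set

noncomputable section
open scoped Classical

abbrev Pt : Type := EuclideanSpace ℝ (Fin 2)

/-- The point with coordinates `(a, b)` in the plane. -/
def pt (a b : ℝ) : Pt := WithLp.toLp 2 ![a, b]

/-- `d₊(e₁,e₂)` where `e₁` is the oriented segment from `p` to `q` and `e₂` the segment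
from `r` to `s`: the Lebesgue measure of the set of `x ∈ [0, ‖q-p‖]` such that some point
of `e₂` has coordinates `(x, y)` with `y ≥ 0` in the frame centered at `p` with the
`x`-axis directed along `e₁`. It is `0` if `e₁` is degenerate. -/
def dplus (p q r s : Pt) : ℝ :=
  if p = q then 0 else
    (volume {x : ℝ | x ∈ Set.Icc (0 : ℝ) (dist p q) ∧
        ∃ y : ℝ, 0 ≤ y ∧
          p + x • (‖q - p‖⁻¹ • (q - p)) +
              y • pt (-(‖q - p‖⁻¹ • (q - p)) 1) ((‖q - p‖⁻¹ • (q - p)) 0)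
            ∈ segment ℝ r s}).toReal

/-- As `dplus`, but for points below the axis (`y ≤ 0`). -/
def dminus (p q r s : Pt) : ℝ :=
  if p = q then 0 else
    (volume {x : ℝ | x ∈ Set.Icc (0 : ℝ) (dist p q) ∧
        ∃ y : ℝ, y ≤ 0 ∧
          p + x • (‖q - p‖⁻¹ • (q - p)) +
              y • pt (-(‖q - p‖⁻¹ • (q - p)) 1) ((‖q - p‖⁻¹ • (q - p)) 0)
            ∈ segment ℝ r s}).toReal

/-- The order function `Ord(e₁,e₂) = d₊(e₁,e₂) − d₋(e₁,e₂)`. -/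
def ordFn (p q r s : Pt) : ℝ := dplus p q r s - dminus p q r s


/-- clamp to `[0,l]`. -/
def clampR (l x : ℝ) : ℝ := min l (max 0 x)

def DD (l a b : ℝ) : ℝ := clampR l (max a b) - clampR l (min a b)

def CC (xr xs yr ys : ℝ) : ℝ := (yr * xs - ys * xr) / (yr - ys)

def Psi (l xr xs yr ys : ℝ) : ℝ :=
  if yr < 0 ∧ ys < 0 then 0
  else DD l (if 0 ≤ yr then xr else CC xr xs yr ys) (if 0 ≤ ys then xs else CC xr xs yr ys)

lemma clampR_mono (l : ℝ) {a b : ℝ} (hab : a ≤ b) : clampR l a ≤ clampR l b := by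
  unfold clampR
  exact min_le_min le_rfl (max_le_max le_rfl hab)

lemma DD_nonneg (l a b : ℝ) : 0 ≤ DD l a b := by
  have := clampR_mono l (min_le_max (a := a) (b := b))
  simp [DD]; linarith

lemma DD_self (l a : ℝ) : DD l a a = 0 := by simp [DD]

lemma DD_comm (l a b : ℝ) : DD l a b = DD l b a := by
  simp [DD, max_comm, min_comm]

lemma CC_comm (xr xs yr ys : ℝ) : CC xs xr ys yr = CC xr xs yr ys := by
  unfold CC
  rw [← neg_div_neg_eq]
  ring_nf

lemma Psi_comm (l xr xs yr ys : ℝ) : Psi l xs xr ys yr = Psi l xr xs yr ys := by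
  unfold Psi
  rw [CC_comm]
  by_cases h : yr < 0 ∧ ys < 0
  · simp [h, and_comm]
  · rw [if_neg (by tauto), if_neg h, DD_comm]

-- the volume computation
lemma vol_Icc_inter (l mi ma : ℝ) (hl : 0 ≤ l) (hm : mi ≤ ma) :
    (volume (Icc 0 l ∩ Icc mi ma)).toReal = clampR l ma - clampR l mi := by
  rw [Icc_inter_Icc, Real.volume_Icc, ENNReal.toReal_ofReal']
  unfold clampR
  rcases le_total mi 0 with h1 | h1 <;> rcases le_total ma 0 with h2 | h2 <;>
    rcases le_total mi l with h3 | h3 <;> rcases le_total ma l with h4 | h4 <;>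
    simp [min_def, max_def] <;> split_ifs <;> linarith

def ES (xr xs yr ys : ℝ) : Set ℝ :=
  {x | ∃ t ∈ Icc (0:ℝ) 1, x = (1-t)*xr + t*xs ∧ 0 ≤ (1-t)*yr + t*ys}

lemma ES_comm (xr xs yr ys : ℝ) : ES xs xr ys yr = ES xr xs yr ys := by
  ext x
  constructor <;> rintro ⟨t, ⟨h0, h1⟩, rfl, hy⟩ <;>
    exact ⟨1-t, ⟨by linarith, by linarith⟩, by ring, by nlinarith⟩

lemma ES_empty {xr xs yr ys : ℝ} (hr : yr < 0) (hs : ys < 0) : ES xr xs yr ys = ∅ := by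
  ext x
  simp only [ES, mem_setOf_eq, mem_empty_iff_false, iff_false]
  rintro ⟨t, ⟨h0, h1⟩, -, hy⟩
  rcases eq_or_lt_of_le h0 with ht | ht
  · nlinarith
  · have h2 : t * ys < 0 := mul_neg_of_pos_of_neg ht hs
    have h3 : (1 - t) * yr ≤ 0 := mul_nonpos_of_nonneg_of_nonpos (by linarith) hr.le
    linarith

lemma ES_full {xr xs yr ys : ℝ} (hr : 0 ≤ yr) (hs : 0 ≤ ys) :
    ES xr xs yr ys = uIcc xr xs := by
  rw [← segment_eq_uIcc, segment_eq_image]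
  ext x
  simp only [ES, mem_setOf_eq, mem_image, smul_eq_mul]
  constructor
  · rintro ⟨t, ht, rfl, -⟩; exact ⟨t, ht, rfl⟩
  · rintro ⟨t, ht, rfl⟩
    exact ⟨t, ht, rfl, by nlinarith [ht.1, ht.2]⟩

lemma ES_cross {xr xs yr ys : ℝ} (hr : 0 ≤ yr) (hs : ys < 0) :
    ES xr xs yr ys = uIcc xr (CC xr xs yr ys) := by
  set C := CC xr xs yr ys with hCdef
  have hden : 0 < yr - ys := by linarith
  set ts := yr / (yr - ys) with htsdef
  have hts0 : 0 ≤ ts := div_nonneg hr hden.le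
  have hts1 : ts ≤ 1 := by
    rw [htsdef, div_le_one hden]; linarith
  have hC : C = xr + ts * (xs - xr) := by
    rw [hCdef, htsdef, CC]
    field_simp
    ring
  rw [← segment_eq_uIcc, segment_eq_image]
  ext x
  simp only [ES, mem_setOf_eq, mem_image, smul_eq_mul]
  constructor
  · rintro ⟨t, ⟨h0, h1⟩, rfl, hy⟩
    have htle : t ≤ ts := by
      rw [htsdef, le_div_iff₀ hden]; nlinarith
    by_cases hts : ts = 0
    · have ht0 : t = 0 := le_antisymm (hts ▸ htle) h0
      exact ⟨0, ⟨le_refl 0, zero_le_one⟩, by rw [ht0]; ring⟩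
    · have htspos : 0 < ts := lt_of_le_of_ne hts0 (Ne.symm hts)
      refine ⟨t / ts, ⟨div_nonneg h0 htspos.le, (div_le_one htspos).2 htle⟩, ?_⟩
      rw [hC]
      field_simp
      ring
  · rintro ⟨σ, ⟨hσ0, hσ1⟩, rfl⟩
    refine ⟨σ * ts, ⟨by positivity, by nlinarith⟩, by rw [hC]; ring, ?_⟩
    have : σ * ts ≤ ts := by nlinarith
    rw [htsdef] at this
    have := (le_div_iff₀ hden).1 this
    nlinarith

lemma vol_set (l xr xs yr ys : ℝ) (hl : 0 ≤ l) :
    (volume {x : ℝ | x ∈ Icc 0 l ∧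
      ∃ t ∈ Icc (0:ℝ) 1, x = (1-t)*xr + t*xs ∧ 0 ≤ (1-t)*yr + t*ys}).toReal
    = Psi l xr xs yr ys := by
  have hset : {x : ℝ | x ∈ Icc 0 l ∧
      ∃ t ∈ Icc (0:ℝ) 1, x = (1-t)*xr + t*xs ∧ 0 ≤ (1-t)*yr + t*ys}
      = Icc 0 l ∩ ES xr xs yr ys := by
    ext x; simp [ES, mem_inter_iff, mem_setOf_eq]
  rw [hset]
  by_cases hr : 0 ≤ yr <;> by_cases hs : 0 ≤ ys
  · rw [ES_full hr hs, uIcc, vol_Icc_inter l _ _ hl inf_le_sup,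
      Psi, if_neg (by push_neg; intro h; linarith), if_pos hr, if_pos hs, DD]
  · rw [ES_cross hr (by linarith), uIcc, vol_Icc_inter l _ _ hl inf_le_sup,
      Psi, if_neg (by push_neg; intro h; linarith), if_pos hr, if_neg hs, DD]
  · rw [← ES_comm, ES_cross hs (by linarith), uIcc, vol_Icc_inter l _ _ hl inf_le_sup,
      ← Psi_comm, Psi, if_neg (by push_neg; intro h; linarith), if_pos hs, if_neg hr, DD,
      CC_comm]
  · rw [ES_empty (by linarith) (by linarith), inter_empty, measure_empty,
      Psi, if_pos ⟨by linarith, by linarith⟩, ENNReal.toReal_zero]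

lemma DD_le {l xr xs a b : ℝ} (hmin : min xr xs ≤ min a b) (hmax : max a b ≤ max xr xs) :
    DD l a b ≤ DD l xr xs :=
  sub_le_sub (clampR_mono _ hmax) (clampR_mono _ hmin)

lemma CC_mem {xr xs yr ys : ℝ} (hr : 0 ≤ yr) (hs : ys < 0) :
    min xr xs ≤ CC xr xs yr ys ∧ CC xr xs yr ys ≤ max xr xs := by
  have hden : 0 < yr - ys := by linarith
  set ts := yr / (yr - ys) with htsdef
  have hts0 : 0 ≤ ts := div_nonneg hr hden.le
  have hts1 : ts ≤ 1 := by rw [htsdef, div_le_one hden]; linarith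
  have hC : CC xr xs yr ys = xr + ts * (xs - xr) := by
    rw [htsdef, CC]; field_simp; ring
  constructor
  · rcases le_total xr xs with h | h
    · rw [min_eq_left h]; nlinarith
    · rw [min_eq_right h]; nlinarith
  · rcases le_total xr xs with h | h
    · rw [max_eq_right h]; nlinarith
    · rw [max_eq_left h]; nlinarith

lemma Psi_nonneg (l xr xs yr ys : ℝ) : 0 ≤ Psi l xr xs yr ys := by
  unfold Psi
  split_ifs <;> first | rfl | exact DD_nonneg _ _ _

lemma Psi_le (l xr xs yr ys : ℝ) : Psi l xr xs yr ys ≤ DD l xr xs := by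
  unfold Psi
  split_ifs with h h1 h2 h2
  · exact DD_nonneg _ _ _
  · exact le_rfl
  · have hs : ys < 0 := by linarith [not_le.mp h2]
    obtain ⟨c1, c2⟩ := CC_mem h1 hs
    exact DD_le (le_min (min_le_left _ _) c1) (max_le (le_max_left _ _) c2)
  · have hr : yr < 0 := not_le.mp h1
    have hs : 0 ≤ ys := by
      by_contra hc; exact h ⟨hr, not_le.mp hc⟩
    obtain ⟨c1, c2⟩ := CC_mem (xr := xs) (xs := xr) hs hr
    rw [CC_comm] at c1 c2
    rw [min_comm xs xr] at c1; rw [max_comm xs xr] at c2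
    exact DD_le (le_min c1 (min_le_right _ _)) (max_le c2 (le_max_right _ _))
  · exact absurd ⟨not_le.mp h1, not_le.mp h2⟩ h

lemma tendsto_of_pair {α : Type*} {fl : Filter α} {f g h : α → ℝ} {v : ℝ}
    (hf : ∀ᶠ x in fl, f x = g x ∨ f x = h x)
    (hg : Tendsto g fl (𝓝 v)) (hh : Tendsto h fl (𝓝 v)) : Tendsto f fl (𝓝 v) := by
  rw [Metric.tendsto_nhds] at hg hh ⊢
  intro ε hε
  filter_upwards [hf, hg ε hε, hh ε hε] with x hx h1 h2
  rcases hx with hx | hx <;> rw [hx] <;> assumption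

lemma tendsto_of_triple {α : Type*} {fl : Filter α} {f g h k : α → ℝ} {v : ℝ}
    (hf : ∀ᶠ x in fl, f x = g x ∨ f x = h x ∨ f x = k x)
    (hg : Tendsto g fl (𝓝 v)) (hh : Tendsto h fl (𝓝 v)) (hk : Tendsto k fl (𝓝 v)) :
    Tendsto f fl (𝓝 v) := by
  rw [Metric.tendsto_nhds] at hg hh hk ⊢
  intro ε hε
  filter_upwards [hf, hg ε hε, hh ε hε, hk ε hε] with x hx h1 h2 h3
  rcases hx with hx | hx | hx <;> rw [hx] <;> assumption

section PsiCont

variable {α : Type*} [TopologicalSpace α] {L XR XS YR YS : α → ℝ} {θ₀ : α}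

lemma DD_contAt (hL : ContinuousAt L θ₀) (hA : ContinuousAt XR θ₀)
    (hB : ContinuousAt XS θ₀) :
    ContinuousAt (fun θ => DD (L θ) (XR θ) (XS θ)) θ₀ := by
  unfold DD clampR
  exact (hL.min (continuousAt_const.max (hA.max hB))).sub
    (hL.min (continuousAt_const.max (hA.min hB)))

lemma CC_contAt (hXR : ContinuousAt XR θ₀) (hXS : ContinuousAt XS θ₀)
    (hYR : ContinuousAt YR θ₀) (hYS : ContinuousAt YS θ₀)
    (hden : YR θ₀ - YS θ₀ ≠ 0) :
    ContinuousAt (fun θ => CC (XR θ) (XS θ) (YR θ) (YS θ)) θ₀ := by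
  unfold CC
  exact ((hYR.mul hXS).sub (hYS.mul hXR)).div (hYR.sub hYS) hden

lemma psi_caseA (hL : ContinuousAt L θ₀) (hXR : ContinuousAt XR θ₀)
    (hXS : ContinuousAt XS θ₀) (hYR : ContinuousAt YR θ₀) (hYS : ContinuousAt YS θ₀)
    (h : 0 < YR θ₀) :
    ContinuousAt (fun θ => Psi (L θ) (XR θ) (XS θ) (YR θ) (YS θ)) θ₀ := by
  have hevr : ∀ᶠ θ in 𝓝 θ₀, 0 < YR θ := hYR (Ioi_mem_nhds h)
  rcases lt_trichotomy (YS θ₀) 0 with hs | hs | hs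
  · -- Psi = DD L XR CC eventually
    have hevs : ∀ᶠ θ in 𝓝 θ₀, YS θ < 0 := hYS (Iio_mem_nhds hs)
    have hCC := CC_contAt hXR hXS hYR hYS (by linarith)
    refine (DD_contAt hL hXR hCC).congr ?_
    filter_upwards [hevr, hevs] with θ h1 h2
    rw [Psi, if_neg (by push_neg; intro hc; linarith), if_pos h1.le, if_neg (not_le.2 h2)]
  · -- YS θ₀ = 0 : pair argument
    have hval : Psi (L θ₀) (XR θ₀) (XS θ₀) (YR θ₀) (YS θ₀) = DD (L θ₀) (XR θ₀) (XS θ₀) := by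
      rw [Psi, if_neg (by push_neg; intro hc; linarith), if_pos h.le, if_pos hs.ge]
    have hCC := CC_contAt hXR hXS hYR hYS (by rw [hs]; simp; linarith)
    have hCCval : CC (XR θ₀) (XS θ₀) (YR θ₀) (YS θ₀) = XS θ₀ := by
      rw [CC, hs, div_eq_iff (by rw [sub_zero]; exact h.ne')]; ring
    show Tendsto _ (𝓝 θ₀) (𝓝 (Psi (L θ₀) (XR θ₀) (XS θ₀) (YR θ₀) (YS θ₀)))
    rw [hval]
    refine tendsto_of_pair (g := fun θ => DD (L θ) (XR θ) (XS θ))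
      (h := fun θ => DD (L θ) (XR θ) (CC (XR θ) (XS θ) (YR θ) (YS θ))) ?_ ?_ ?_
    · filter_upwards [hevr] with θ h1
      by_cases h2 : 0 ≤ YS θ
      · left; rw [Psi, if_neg (by push_neg; intro hc; linarith), if_pos h1.le, if_pos h2]
      · right; rw [Psi, if_neg (by push_neg; intro hc; linarith), if_pos h1.le, if_neg h2]
    · exact DD_contAt hL hXR hXS
    · have := DD_contAt hL hXR hCC
      unfold ContinuousAt at this
      beta_reduce at this
      rwa [hCCval] at this
  · -- eventually both positive
    have hevs : ∀ᶠ θ in 𝓝 θ₀, 0 < YS θ := hYS (Ioi_mem_nhds hs)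
    refine (DD_contAt hL hXR hXS).congr ?_
    filter_upwards [hevr, hevs] with θ h1 h2
    rw [Psi, if_neg (by push_neg; intro hc; linarith), if_pos h1.le, if_pos h2.le]

lemma psi_caseD (hL : ContinuousAt L θ₀) (hXR : ContinuousAt XR θ₀)
    (hXS : ContinuousAt XS θ₀) (hYR : ContinuousAt YR θ₀) (hYS : ContinuousAt YS θ₀)
    (hr : YR θ₀ = 0) (hs : YS θ₀ < 0) :
    ContinuousAt (fun θ => Psi (L θ) (XR θ) (XS θ) (YR θ) (YS θ)) θ₀ := by
  have hevs : ∀ᶠ θ in 𝓝 θ₀, YS θ < 0 := hYS (Iio_mem_nhds hs)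
  have hden : YR θ₀ - YS θ₀ ≠ 0 := by rw [hr]; simp; linarith
  have hCC := CC_contAt hXR hXS hYR hYS hden
  have hys : YS θ₀ ≠ 0 := ne_of_lt hs
  have hCCval : CC (XR θ₀) (XS θ₀) (YR θ₀) (YS θ₀) = XR θ₀ := by
    rw [CC, hr]; field_simp; ring
  have hval : Psi (L θ₀) (XR θ₀) (XS θ₀) (YR θ₀) (YS θ₀) = 0 := by
    rw [Psi, if_neg (by push_neg; intro hc; linarith), if_pos hr.ge, if_neg (not_le.2 hs),
      hCCval, DD_self]
  show Tendsto _ (𝓝 θ₀) (𝓝 (Psi (L θ₀) (XR θ₀) (XS θ₀) (YR θ₀) (YS θ₀)))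
  rw [hval]
  refine tendsto_of_triple (g := fun _ => (0:ℝ))
    (h := fun θ => DD (L θ) (XR θ) (CC (XR θ) (XS θ) (YR θ) (YS θ)))
    (k := fun θ => DD (L θ) (CC (XR θ) (XS θ) (YR θ) (YS θ))
      (CC (XR θ) (XS θ) (YR θ) (YS θ))) ?_ tendsto_const_nhds ?_ ?_
  · filter_upwards [hevs] with θ h2
    by_cases h1 : 0 ≤ YR θ
    · right; left
      rw [Psi, if_neg (by push_neg; intro hc; linarith), if_pos h1, if_neg (not_le.2 h2)]
    · left
      rw [Psi, if_pos ⟨not_le.mp h1, h2⟩]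
  · have := DD_contAt hL hXR hCC
    unfold ContinuousAt at this
    beta_reduce at this
    rw [hCCval] at this
    simpa [DD_self] using this
  · have := DD_contAt hL hCC hCC
    unfold ContinuousAt at this
    beta_reduce at this
    rw [hCCval] at this
    simpa [DD_self] using this

lemma psi_caseB (hYR : ContinuousAt YR θ₀) (hYS : ContinuousAt YS θ₀)
    (hr : YR θ₀ < 0) (hs : YS θ₀ < 0) :
    ContinuousAt (fun θ => Psi (L θ) (XR θ) (XS θ) (YR θ) (YS θ)) θ₀ := by
  refine ContinuousAt.congr (continuousAt_const : ContinuousAt (fun _ => (0:ℝ)) θ₀) ?_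
  filter_upwards [hYR (Iio_mem_nhds hr), hYS (Iio_mem_nhds hs)] with θ h1 h2
  simp only [mem_preimage, mem_Iio] at h1 h2
  exact (if_pos ⟨h1, h2⟩ (h := instDecidableAnd)).symm

lemma psi_contAt (hL : ContinuousAt L θ₀) (hXR : ContinuousAt XR θ₀)
    (hXS : ContinuousAt XS θ₀) (hYR : ContinuousAt YR θ₀) (hYS : ContinuousAt YS θ₀)
    (h : ¬(YR θ₀ = 0 ∧ YS θ₀ = 0)) :
    ContinuousAt (fun θ => Psi (L θ) (XR θ) (XS θ) (YR θ) (YS θ)) θ₀ := by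
  have hswap : (fun θ => Psi (L θ) (XR θ) (XS θ) (YR θ) (YS θ))
      = (fun θ => Psi (L θ) (XS θ) (XR θ) (YS θ) (YR θ)) :=
    funext fun θ => (Psi_comm _ _ _ _ _).symm
  rcases lt_trichotomy (YR θ₀) 0 with h1 | h1 | h1
  · rcases lt_trichotomy (YS θ₀) 0 with h2 | h2 | h2
    · exact psi_caseB hYR hYS h1 h2
    · rw [hswap]; exact psi_caseD hL hXS hXR hYS hYR h2 h1
    · rw [hswap]; exact psi_caseA hL hXS hXR hYS hYR h2
  · rcases lt_trichotomy (YS θ₀) 0 with h2 | h2 | h2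
    · exact psi_caseD hL hXR hXS hYR hYS h1 h2
    · exact absurd ⟨h1, h2⟩ h
    · rw [hswap]; exact psi_caseA hL hXS hXR hYS hYR h2
  · exact psi_caseA hL hXR hXS hYR hYS h1

end PsiCont


lemma openSegment_subset_intrinsicInterior
    {E : Type*} [NormedAddCommGroup E] [NormedSpace ℝ E] {r s : E} (hrs : r ≠ s) :
    openSegment ℝ r s ⊆ intrinsicInterior ℝ (segment ℝ r s) := by
  intro z hz
  have hspan : affineSpan ℝ (segment ℝ r s) = line[ℝ, r, s] := by
    apply le_antisymm
    · rw [affineSpan_le]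
      exact (AffineSubspace.convex _).segment_subset
        (subset_affineSpan ℝ _ (by simp))
        (subset_affineSpan ℝ _ (by simp))
    · exact affineSpan_mono ℝ (by
        intro w hw
        rcases hw with hw | hw
        · exact hw ▸ left_mem_segment ℝ r s
        · exact (mem_singleton_iff.1 hw) ▸ right_mem_segment ℝ r s)
  obtain ⟨t, ⟨ht0, ht1⟩, rfl⟩ := (openSegment_eq_image ℝ r s) ▸ hz
  set z := (1 - t) • r + t • s with hzdef
  have hzseg : z ∈ segment ℝ r s := by
    rw [segment_eq_image]; exact ⟨t, ⟨ht0.le, ht1.le⟩, rfl⟩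
  have hzline : z = AffineMap.lineMap r s t := by
    rw [AffineMap.lineMap_apply_module] <;> module
  rw [mem_intrinsicInterior]
  refine ⟨⟨z, subset_affineSpan ℝ _ hzseg⟩, ?_, rfl⟩
  rw [mem_interior_iff_mem_nhds, Metric.mem_nhds_iff]
  have hdpos : 0 < dist r s := dist_pos.2 hrs
  refine ⟨min t (1 - t) * dist r s, mul_pos (lt_min ht0 (by linarith)) hdpos, ?_⟩
  rintro ⟨w, hw⟩ hball
  simp only [Metric.mem_ball, Subtype.dist_eq] at hball
  -- w is on the line
  have hwline : w ∈ line[ℝ, r, s] := hspan ▸ hw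
  have hmem : (w - r) +ᵥ r ∈ line[ℝ, r, s] := by
    simpa [vadd_eq_add, sub_add_cancel] using hwline
  obtain ⟨τ, hτ⟩ := vadd_left_mem_affineSpan_pair.1 hmem
  rw [vsub_eq_sub] at hτ
  have hw2 : w = τ • (s - r) + r := sub_eq_iff_eq_add.mp hτ.symm
  have hwval : w = AffineMap.lineMap r s τ := by
    rw [hw2, AffineMap.lineMap_apply_module] <;> module
  have hdist : dist w z = |τ - t| * dist r s := by
    rw [hwval, hzline, dist_lineMap_lineMap, Real.dist_eq]
  rw [hdist] at hball
  have habs : |τ - t| < min t (1 - t) := lt_of_mul_lt_mul_right hball hdpos.le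
  have hm1 : min t (1-t) ≤ t := min_le_left _ _
  have hm2 : min t (1-t) ≤ 1 - t := min_le_right _ _
  have habs' := abs_lt.1 habs
  have h1 : 0 < τ := by linarith [habs'.1]
  have h2 : τ < 1 := by linarith [habs'.2]
  show w ∈ segment ℝ r s
  rw [segment_eq_image]
  exact ⟨τ, ⟨h1.le, h2.le⟩, by rw [hwval, AffineMap.lineMap_apply_module] <;> module⟩


def uvec (p q : Pt) : Pt := ‖q - p‖⁻¹ • (q - p)
def Xc (p q z : Pt) : ℝ := (z 0 - p 0) * uvec p q 0 + (z 1 - p 1) * uvec p q 1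
def Yc (p q z : Pt) : ℝ := -(z 0 - p 0) * uvec p q 1 + (z 1 - p 1) * uvec p q 0

lemma uvec_unit {p q : Pt} (hpq : p ≠ q) : uvec p q 0 ^ 2 + uvec p q 1 ^ 2 = 1 := by
  have hne : q - p ≠ 0 := sub_ne_zero.2 (Ne.symm hpq)
  have h1 : ‖uvec p q‖ = 1 := norm_smul_inv_norm (𝕜 := ℝ) hne
  have h2 := EuclideanSpace.norm_eq (uvec p q)
  rw [h1] at h2
  have h3 : Real.sqrt (∑ i : Fin 2, ‖uvec p q i‖^2) = 1 := h2.symm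
  rw [Fin.sum_univ_two] at h3
  have := Real.sqrt_eq_one.mp h3
  simpa [Real.norm_eq_abs, sq_abs] using this

lemma decomp {p q : Pt} (hpq : p ≠ q) (x y : ℝ) (z : Pt) :
    p + x • uvec p q + y • pt (-(uvec p q 1)) (uvec p q 0) = z
      ↔ x = Xc p q z ∧ y = Yc p q z := by
  have hunit := uvec_unit hpq
  set u0 := uvec p q 0
  set u1 := uvec p q 1
  constructor
  · intro h
    have h0 : (p + x • uvec p q + y • pt (-u1) u0) 0 = z 0 := by rw [h]
    have h1 : (p + x • uvec p q + y • pt (-u1) u0) 1 = z 1 := by rw [h]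
    simp only [PiLp.add_apply, PiLp.smul_apply, smul_eq_mul] at h0 h1
    have e0 : p 0 + x * u0 + y * (-u1) = z 0 := by simpa [pt] using h0
    have e1 : p 1 + x * u1 + y * u0 = z 1 := by simpa [pt] using h1
    constructor
    · show x = (z 0 - p 0) * u0 + (z 1 - p 1) * u1
      linear_combination u0 * e0 + u1 * e1 - x * hunit
    · show y = -(z 0 - p 0) * u1 + (z 1 - p 1) * u0
      linear_combination (-u1) * e0 + u0 * e1 - y * hunit
  · rintro ⟨rfl, rfl⟩
    ext i
    fin_cases i
    · show p 0 + Xc p q z * u0 + Yc p q z * (-u1) = z 0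
      simp only [Xc, Yc]
      linear_combination (z 0 - p 0) * hunit
    · show p 1 + Xc p q z * u1 + Yc p q z * u0 = z 1
      simp only [Xc, Yc]
      linear_combination (z 1 - p 1) * hunit


lemma Xc_affine (p q r s : Pt) (t : ℝ) :
    Xc p q ((1-t) • r + t • s) = (1-t) * Xc p q r + t * Xc p q s := by
  simp only [Xc, PiLp.add_apply, PiLp.smul_apply, smul_eq_mul]
  ring

lemma Yc_affine (p q r s : Pt) (t : ℝ) :
    Yc p q ((1-t) • r + t • s) = (1-t) * Yc p q r + t * Yc p q s := by
  simp only [Yc, PiLp.add_apply, PiLp.smul_apply, smul_eq_mul]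
  ring

lemma dplus_eq {p q : Pt} (r s : Pt) (hpq : p ≠ q) :
    dplus p q r s = Psi (dist p q) (Xc p q r) (Xc p q s) (Yc p q r) (Yc p q s) := by
  rw [dplus, if_neg hpq, ← vol_set _ _ _ _ _ dist_nonneg]
  congr 2
  ext x
  simp only [mem_setOf_eq]
  refine and_congr_right fun _ => ?_
  simp only [segment_eq_image, mem_image]
  constructor
  · rintro ⟨y, hy, t, ht, hzt⟩
    obtain ⟨hx, hyy⟩ := (decomp hpq x y _).mp hzt.symm
    refine ⟨t, ht, by rw [hx, Xc_affine], ?_⟩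
    rw [← Yc_affine, ← hyy]
    exact hy
  · rintro ⟨t, ht, hx, hy⟩
    refine ⟨(1-t) * Yc p q r + t * Yc p q s, hy, t, ht, ?_⟩
    exact ((decomp hpq x _ _).mpr ⟨by rw [hx, Xc_affine], (Yc_affine p q r s t).symm⟩).symm

lemma dminus_eq {p q : Pt} (r s : Pt) (hpq : p ≠ q) :
    dminus p q r s = Psi (dist p q) (Xc p q r) (Xc p q s) (-Yc p q r) (-Yc p q s) := by
  rw [dminus, if_neg hpq, ← vol_set _ _ _ _ _ dist_nonneg]
  congr 2
  ext x
  simp only [mem_setOf_eq]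
  refine and_congr_right fun _ => ?_
  simp only [segment_eq_image, mem_image]
  constructor
  · rintro ⟨y, hy, t, ht, hzt⟩
    obtain ⟨hx, hyy⟩ := (decomp hpq x y _).mp hzt.symm
    refine ⟨t, ht, by rw [hx, Xc_affine], ?_⟩
    have h2 := Yc_affine p q r s t
    rw [← hyy] at h2
    nlinarith [hy, h2]
  · rintro ⟨t, ht, hx, hy⟩
    refine ⟨(1-t) * Yc p q r + t * Yc p q s, by nlinarith [hy], t, ht, ?_⟩
    exact ((decomp hpq x _ _).mpr ⟨by rw [hx, Xc_affine], (Yc_affine p q r s t).symm⟩).symm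

lemma dplus_bounds (p q r s : Pt) : 0 ≤ dplus p q r s ∧ dplus p q r s ≤ dist p q := by
  rw [dplus]
  split_ifs with hpq
  · simp [dist_nonneg]
  refine ⟨ENNReal.toReal_nonneg, ?_⟩
  calc (volume {x : ℝ | x ∈ Set.Icc (0 : ℝ) (dist p q) ∧ _}).toReal
      ≤ (volume (Set.Icc (0:ℝ) (dist p q))).toReal := by
        apply ENNReal.toReal_mono
        · rw [Real.volume_Icc]; exact ENNReal.ofReal_ne_top
        · exact measure_mono fun x hx => hx.1
    _ = dist p q := by
        rw [Real.volume_Icc, sub_zero, ENNReal.toReal_ofReal dist_nonneg]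

lemma dminus_bounds (p q r s : Pt) : 0 ≤ dminus p q r s ∧ dminus p q r s ≤ dist p q := by
  rw [dminus]
  split_ifs with hpq
  · simp [dist_nonneg]
  refine ⟨ENNReal.toReal_nonneg, ?_⟩
  calc (volume {x : ℝ | x ∈ Set.Icc (0 : ℝ) (dist p q) ∧ _}).toReal
      ≤ (volume (Set.Icc (0:ℝ) (dist p q))).toReal := by
        apply ENNReal.toReal_mono
        · rw [Real.volume_Icc]; exact ENNReal.ofReal_ne_top
        · exact measure_mono fun x hx => hx.1
    _ = dist p q := by
        rw [Real.volume_Icc, sub_zero, ENNReal.toReal_ofReal dist_nonneg]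

lemma DD_zero_of_sep (p q r s : Pt) (hpq : p ≠ q)
    (h : ∀ z : Pt, ¬ (z ∈ intrinsicInterior ℝ (segment ℝ p q) ∧
      z ∈ intrinsicInterior ℝ (segment ℝ r s)))
    (hYr : Yc p q r = 0) (hYs : Yc p q s = 0) :
    DD (dist p q) (Xc p q r) (Xc p q s) = 0 := by
  set l := dist p q with hldef
  set Xr := Xc p q r with hXrdef
  set Xs := Xc p q s with hXsdef
  by_contra hne
  have hl0 : 0 < l := dist_pos.2 hpq
  have hlt : clampR l (min Xr Xs) < clampR l (max Xr Xs) :=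
    (clampR_mono l min_le_max).lt_of_ne fun hc => hne (by rw [DD, ← hc, sub_self])
  obtain ⟨x, hx1, hx2⟩ := exists_between hlt
  have hcl_lb : 0 ≤ clampR l (min Xr Xs) := le_min hl0.le (le_max_left _ _)
  have hcl_ub : clampR l (max Xr Xs) ≤ l := min_le_left _ _
  have hx0 : 0 < x := lt_of_le_of_lt hcl_lb hx1
  have hxl : x < l := lt_of_lt_of_le hx2 hcl_ub
  have hxmi : min Xr Xs < x := by
    rcases le_total (max 0 (min Xr Xs)) l with hc | hc
    · have : clampR l (min Xr Xs) = max 0 (min Xr Xs) := min_eq_right hc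
      calc min Xr Xs ≤ max 0 (min Xr Xs) := le_max_right _ _
        _ < x := this ▸ hx1
    · exfalso
      have : clampR l (min Xr Xs) = l := min_eq_left hc
      linarith [this ▸ hx1]
  have hxma : x < max Xr Xs := by
    rcases le_total (max Xr Xs) 0 with hc | hc
    · exfalso
      have : clampR l (max Xr Xs) ≤ 0 := by
        rw [clampR, max_eq_left hc]; exact min_le_right _ _
      linarith
    · have h2 : x < max 0 (max Xr Xs) := lt_of_lt_of_le hx2 (min_le_right _ _)
      rwa [max_eq_right hc] at h2
  have hXrs : Xr ≠ Xs := by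
    intro hc
    rw [hc] at hxmi hxma
    simp only [min_self, max_self] at hxmi hxma
    linarith
  have hrs : r ≠ s := fun hc => hXrs (by rw [hXrdef, hXsdef, hc])
  -- representations
  have hnorm : ‖q - p‖ ≠ 0 := norm_ne_zero_iff.2 (sub_ne_zero.2 (Ne.symm hpq))
  have hlu : l • uvec p q = q - p := by
    rw [hldef, dist_comm, dist_eq_norm, uvec, smul_smul, mul_inv_cancel₀ hnorm, one_smul]
  have hr_eq : r = p + Xr • uvec p q := by
    have := (decomp hpq Xr 0 r).mpr ⟨hXrdef, hYr.symm⟩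
    rw [zero_smul, add_zero] at this
    exact this.symm
  have hs_eq : s = p + Xs • uvec p q := by
    have := (decomp hpq Xs 0 s).mpr ⟨hXsdef, hYs.symm⟩
    rw [zero_smul, add_zero] at this
    exact this.symm
  have hz1 : p + x • uvec p q ∈ openSegment ℝ p q := by
    rw [openSegment_eq_image]
    refine ⟨x / l, ⟨div_pos hx0 hl0, (div_lt_one hl0).2 hxl⟩, ?_⟩
    have hxll : x / l * l = x := div_mul_cancel₀ x hl0.ne'
    have h1 : (1 - x/l) • p + (x/l) • q = p + (x/l) • (q - p) := by module
    show (1 - x/l) • p + (x/l) • q = p + x • uvec p q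
    rw [h1, ← hlu, smul_smul, hxll]
  have hz2 : p + x • uvec p q ∈ openSegment ℝ r s := by
    rw [openSegment_eq_image]
    set t := (x - Xr) / (Xs - Xr) with htdef
    have hden : Xs - Xr ≠ 0 := sub_ne_zero.2 (Ne.symm hXrs)
    have ht : t ∈ Ioo (0:ℝ) 1 := by
      rcases lt_or_gt_of_ne hXrs with hlt' | hlt'
      · have hmi : min Xr Xs = Xr := min_eq_left hlt'.le
        have hma : max Xr Xs = Xs := max_eq_right hlt'.le
        constructor
        · exact div_pos (by rw [hmi] at hxmi; linarith) (by linarith)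
        · rw [htdef, div_lt_one (by linarith)]
          rw [hma] at hxma; linarith
      · have hmi : min Xr Xs = Xs := min_eq_right hlt'.le
        have hma : max Xr Xs = Xr := max_eq_left hlt'.le
        have hb : Xs - Xr < 0 := by linarith
        have hnum : x - Xr < 0 := by rw [hma] at hxma; linarith
        have ht1 : t - 1 = (x - Xs) / (Xs - Xr) := by
          rw [htdef]; field_simp; ring
        have hnum2 : 0 < x - Xs := by rw [hmi] at hxmi; linarith
        constructor
        · exact div_pos_iff.mpr (Or.inr ⟨hnum, hb⟩)
        · have := div_neg_of_pos_of_neg hnum2 hb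
          rw [← ht1] at this; linarith
    refine ⟨t, ht, ?_⟩
    have hcomb : (1 - t) * Xr + t * Xs = x := by
      rw [htdef]; field_simp; ring
    show (1 - t) • r + t • s = p + x • uvec p q
    rw [hr_eq, hs_eq, ← hcomb]
    module
  exact h _ ⟨openSegment_subset_intrinsicInterior hpq hz1,
    openSegment_subset_intrinsicInterior hrs hz2⟩

/-- The order function `Ord`, regarded as a function of the four endpoints
of the two oriented segments (a map `(ℝ²)⁴ → ℝ`), is continuous at every pair of segments
`(e₁, e₂)` that do not intersect at a point lying in the relative interior of both. -/
theorem ordFn_continuousAt (p q r s : Pt)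
    (h : ∀ z : Pt, ¬ (z ∈ intrinsicInterior ℝ (segment ℝ p q) ∧
      z ∈ intrinsicInterior ℝ (segment ℝ r s))) :
    ContinuousAt (fun x : Pt × Pt × Pt × Pt => ordFn x.1 x.2.1 x.2.2.1 x.2.2.2)
      (p, q, r, s) := by
  by_cases hpq : p = q
  · subst hpq
    have key : ∀ θ : Pt × Pt × Pt × Pt, ‖ordFn θ.1 θ.2.1 θ.2.2.1 θ.2.2.2‖ ≤ dist θ.1 θ.2.1 := by
      intro θ
      obtain ⟨h1, h2⟩ := dplus_bounds θ.1 θ.2.1 θ.2.2.1 θ.2.2.2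
      obtain ⟨h3, h4⟩ := dminus_bounds θ.1 θ.2.1 θ.2.2.1 θ.2.2.2
      rw [ordFn, Real.norm_eq_abs, abs_le]
      constructor <;> linarith
    have h0 : ordFn p p r s = 0 := by simp [ordFn, dplus, dminus]
    show Tendsto _ (𝓝 (p, p, r, s)) (𝓝 (ordFn p p r s))
    rw [h0]
    apply squeeze_zero_norm key
    have hc : Continuous fun θ : Pt × Pt × Pt × Pt => dist θ.1 θ.2.1 :=
      continuous_fst.dist (continuous_fst.comp continuous_snd)
    have h5 := hc.continuousAt (x := (p, p, r, s))
    unfold ContinuousAt at h5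
    beta_reduce at h5
    simpa using h5
  · have hθne : ∀ᶠ θ : Pt × Pt × Pt × Pt in 𝓝 (p, q, r, s), θ.1 ≠ θ.2.1 := by
      have hcont : Continuous fun θ : Pt × Pt × Pt × Pt => (θ.1, θ.2.1) :=
        continuous_fst.prodMk (continuous_fst.comp continuous_snd)
      have hopen : IsOpen {w : Pt × Pt | w.1 ≠ w.2} := isClosed_diagonal.isOpen_compl
      exact (hopen.preimage hcont).mem_nhds hpq
    have hL : ContinuousAt (fun θ : Pt × Pt × Pt × Pt => dist θ.1 θ.2.1) (p, q, r, s) :=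
      (continuous_fst.dist (continuous_fst.comp continuous_snd)).continuousAt
    have hnorm0 : ‖q - p‖ ≠ 0 := norm_ne_zero_iff.2 (sub_ne_zero.2 (Ne.symm hpq))
    have huv : ∀ i : Fin 2,
        ContinuousAt (fun θ : Pt × Pt × Pt × Pt => uvec θ.1 θ.2.1 i) (p, q, r, s) := by
      intro i
      have hform : (fun θ : Pt × Pt × Pt × Pt => uvec θ.1 θ.2.1 i)
          = fun θ : Pt × Pt × Pt × Pt => ‖θ.2.1 - θ.1‖⁻¹ * (θ.2.1 i - θ.1 i) := by
        funext θ
        simp [uvec, PiLp.smul_apply, PiLp.sub_apply, smul_eq_mul]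
      rw [hform]
      have h1 : ContinuousAt (fun θ : Pt × Pt × Pt × Pt => ‖θ.2.1 - θ.1‖⁻¹) (p, q, r, s) := by
        apply ContinuousAt.inv₀
        · exact ((continuous_fst.comp continuous_snd).sub continuous_fst).norm.continuousAt
        · exact hnorm0
      exact h1.mul ((((PiLp.continuous_apply 2 (fun _ : Fin 2 => ℝ) i).comp (continuous_fst.comp continuous_snd)).sub
        ((PiLp.continuous_apply 2 (fun _ : Fin 2 => ℝ) i).comp continuous_fst)).continuousAt)
    have hXc : ∀ f : Pt × Pt × Pt × Pt → Pt, Continuous f →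
        ContinuousAt (fun θ : Pt × Pt × Pt × Pt => Xc θ.1 θ.2.1 (f θ)) (p, q, r, s) := by
      intro f hf
      unfold Xc
      exact ((((PiLp.continuous_apply 2 (fun _ : Fin 2 => ℝ) (0 : Fin 2)).comp hf).continuousAt.sub
        ((PiLp.continuous_apply 2 (fun _ : Fin 2 => ℝ) (0 : Fin 2)).comp continuous_fst).continuousAt).mul (huv 0)).add
        ((((PiLp.continuous_apply 2 (fun _ : Fin 2 => ℝ) (1 : Fin 2)).comp hf).continuousAt.sub
        ((PiLp.continuous_apply 2 (fun _ : Fin 2 => ℝ) (1 : Fin 2)).comp continuous_fst).continuousAt).mul (huv 1))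
    have hYc : ∀ f : Pt × Pt × Pt × Pt → Pt, Continuous f →
        ContinuousAt (fun θ : Pt × Pt × Pt × Pt => Yc θ.1 θ.2.1 (f θ)) (p, q, r, s) := by
      intro f hf
      unfold Yc
      exact (((((PiLp.continuous_apply 2 (fun _ : Fin 2 => ℝ) (0 : Fin 2)).comp hf).continuousAt.sub
        ((PiLp.continuous_apply 2 (fun _ : Fin 2 => ℝ) (0 : Fin 2)).comp continuous_fst).continuousAt).neg).mul (huv 1)).add
        ((((PiLp.continuous_apply 2 (fun _ : Fin 2 => ℝ) (1 : Fin 2)).comp hf).continuousAt.sub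
        ((PiLp.continuous_apply 2 (fun _ : Fin 2 => ℝ) (1 : Fin 2)).comp continuous_fst).continuousAt).mul (huv 0))
    have hfr : Continuous fun θ : Pt × Pt × Pt × Pt => θ.2.2.1 :=
      continuous_fst.comp (continuous_snd.comp continuous_snd)
    have hfs : Continuous fun θ : Pt × Pt × Pt × Pt => θ.2.2.2 :=
      continuous_snd.comp (continuous_snd.comp continuous_snd)
    have hXR := hXc _ hfr
    have hXS := hXc _ hfs
    have hYR := hYc _ hfr
    have hYS := hYc _ hfs
    by_cases hy : Yc p q r = 0 ∧ Yc p q s = 0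
    · -- squeeze case
      have hval : ordFn p q r s = 0 := by
        rw [ordFn, dplus_eq _ _ hpq, dminus_eq _ _ hpq, hy.1, hy.2, neg_zero, sub_self]
      show Tendsto _ (𝓝 (p, q, r, s)) (𝓝 (ordFn p q r s))
      rw [hval]
      apply squeeze_zero_norm'
        (a := fun θ : Pt × Pt × Pt × Pt =>
          DD (dist θ.1 θ.2.1) (Xc θ.1 θ.2.1 θ.2.2.1) (Xc θ.1 θ.2.1 θ.2.2.2))
      · filter_upwards [hθne] with θ hθ
        rw [ordFn, dplus_eq _ _ hθ, dminus_eq _ _ hθ, Real.norm_eq_abs, abs_le]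
        constructor
        · have h1 := Psi_nonneg (dist θ.1 θ.2.1) (Xc θ.1 θ.2.1 θ.2.2.1) (Xc θ.1 θ.2.1 θ.2.2.2)
            (Yc θ.1 θ.2.1 θ.2.2.1) (Yc θ.1 θ.2.1 θ.2.2.2)
          have h2 := Psi_le (dist θ.1 θ.2.1) (Xc θ.1 θ.2.1 θ.2.2.1) (Xc θ.1 θ.2.1 θ.2.2.2)
            (-Yc θ.1 θ.2.1 θ.2.2.1) (-Yc θ.1 θ.2.1 θ.2.2.2)
          linarith
        · have h1 := Psi_le (dist θ.1 θ.2.1) (Xc θ.1 θ.2.1 θ.2.2.1) (Xc θ.1 θ.2.1 θ.2.2.2)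
            (Yc θ.1 θ.2.1 θ.2.2.1) (Yc θ.1 θ.2.1 θ.2.2.2)
          have h2 := Psi_nonneg (dist θ.1 θ.2.1) (Xc θ.1 θ.2.1 θ.2.2.1) (Xc θ.1 θ.2.1 θ.2.2.2)
            (-Yc θ.1 θ.2.1 θ.2.2.1) (-Yc θ.1 θ.2.1 θ.2.2.2)
          linarith
      · have hDD := DD_contAt hL hXR hXS
        unfold ContinuousAt at hDD
        beta_reduce at hDD
        rwa [DD_zero_of_sep p q r s hpq h hy.1 hy.2] at hDD
    · -- continuous case
      have heq : (fun θ : Pt × Pt × Pt × Pt =>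
          Psi (dist θ.1 θ.2.1) (Xc θ.1 θ.2.1 θ.2.2.1) (Xc θ.1 θ.2.1 θ.2.2.2)
            (Yc θ.1 θ.2.1 θ.2.2.1) (Yc θ.1 θ.2.1 θ.2.2.2)
          - Psi (dist θ.1 θ.2.1) (Xc θ.1 θ.2.1 θ.2.2.1) (Xc θ.1 θ.2.1 θ.2.2.2)
            (-Yc θ.1 θ.2.1 θ.2.2.1) (-Yc θ.1 θ.2.1 θ.2.2.2))
          =ᶠ[𝓝 (p, q, r, s)] (fun θ => ordFn θ.1 θ.2.1 θ.2.2.1 θ.2.2.2) := by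
        filter_upwards [hθne] with θ hθ
        rw [ordFn, dplus_eq _ _ hθ, dminus_eq _ _ hθ]
      refine ContinuousAt.congr (ContinuousAt.sub ?_ ?_) heq
      · exact psi_contAt hL hXR hXS hYR hYS hy
      · refine psi_contAt hL hXR hXS hYR.neg hYS.neg ?_
        simpa using hy
end
end

section
/- Let e₁ be the oriented segment from (0,0) to (l,0) with l > 0, and let e₂ be a segment in ℝ² whose intersection with the closed upper half-plane {(x,y) : y ≥ 0} is nonempty, with endpoints (x₁,y₁) and (x₂,y₂). Then d₊(e₁,e₂) = |f(x₂/l) − f(x₁/l)| · l, where f(z) = max(min(z,1),0). -/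
open MeasureTheory Filter Topology Set

noncomputable section
open scoped Classical

lemma clamp_aux (l m M : ℝ) (hl : 0 < l) (h : m ≤ M) :
    max (min l M - max 0 m) 0 = max (min M l) 0 - max (min m l) 0 := by
  rcases le_total M 0 with h2 | h2
  · rw [max_eq_right ((min_le_left M l).trans h2),
      max_eq_right ((min_le_left m l).trans (h.trans h2))]
    rw [max_eq_right (by linarith [min_le_right l M, le_max_left (0:ℝ) m])]
    ring
  · rcases le_total l m with h3 | h3
    · rw [min_eq_right h3, min_eq_right (h3.trans h),
        max_eq_right (by linarith [min_le_left l M, le_max_right (0:ℝ) m])]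
      ring
    · rw [max_eq_left (le_min h2 hl.le), min_eq_left h3, max_comm m 0,
        max_eq_left (sub_nonneg.2 (max_le (le_min hl.le h2) (le_min h3 h))), min_comm]

lemma clamp_arith (l x₁ x₂ : ℝ) (hl : 0 < l) :
    max (min l (max x₁ x₂) - max 0 (min x₁ x₂)) 0 =
      |max (min (x₂ / l) 1) 0 - max (min (x₁ / l) 1) 0| * l := by
  have hdiv : ∀ x : ℝ, max (min (x / l) 1) 0 * l = max (min x l) 0 := by
    intro x
    have h1 : min (x / l) 1 = min x l / l := by
      rw [← min_div_div_right hl.le, div_self hl.ne']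
    have h2 : max (min x l / l) 0 = max (min x l) 0 / l := by
      rw [← max_div_div_right hl.le, zero_div]
    rw [h1, h2, div_mul_cancel₀ _ hl.ne']
  have habs : |max (min (x₂ / l) 1) 0 - max (min (x₁ / l) 1) 0| * l =
      |max (min x₂ l) 0 - max (min x₁ l) 0| := by
    rw [← abs_of_pos hl, ← abs_mul, sub_mul, abs_of_pos hl, hdiv, hdiv]
  rw [habs, ← max_sub_min_eq_abs]
  have mono : ∀ u v : ℝ, u ≤ v → max (min u l) 0 ≤ max (min v l) 0 :=
    fun u v huv => max_le_max (min_le_min huv le_rfl) le_rfl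
  rcases le_total x₁ x₂ with h | h
  · rw [max_eq_right h, min_eq_left h, max_eq_right (mono _ _ h), min_eq_left (mono _ _ h)]
    exact clamp_aux l x₁ x₂ hl h
  · rw [max_eq_left h, min_eq_right h, max_eq_left (mono _ _ h), min_eq_right (mono _ _ h)]
    exact clamp_aux l x₂ x₁ hl h

/-- Let `e₁` be the oriented segment from `(0,0)` to `(l,0)` with `l > 0`,
and let `e₂` be a segment (from `a` to `b`) whose intersection with the closed upper
half-plane `{(x,y) : y ≥ 0}` is nonempty, with endpoints `(x₁,y₁)` and `(x₂,y₂)`.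
Then `d₊(e₁,e₂) = |f(x₂/l) − f(x₁/l)| · l`, where `f(z) = max(min(z,1),0)`. -/
theorem dplus_formula (l x₁ y₁ x₂ y₂ : ℝ) (a b : Pt) (hl : 0 < l)
    (hcap : segment ℝ a b ∩ {z : Pt | 0 ≤ z 1} = segment ℝ (pt x₁ y₁) (pt x₂ y₂)) :
    dplus (pt 0 0) (pt l 0) a b =
      |max (min (x₂ / l) 1) 0 - max (min (x₁ / l) 1) 0| * l := by
  have hne : pt 0 0 ≠ pt l 0 := by
    intro h
    have h0 : (pt 0 0 : Pt) 0 = (pt l 0 : Pt) 0 := by rw [h]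
    simp [pt] at h0
    exact hl.ne h0
  have hnorm : ‖pt l 0 - pt 0 0‖ = l := by
    rw [EuclideanSpace.norm_eq]
    simp [pt, Fin.sum_univ_two, Real.sqrt_sq hl.le]
  have hdist : dist (pt 0 0) (pt l 0) = l := by rw [dist_eq_norm', hnorm]
  have hframe : ∀ x y : ℝ,
      pt 0 0 + x • (‖pt l 0 - pt 0 0‖⁻¹ • (pt l 0 - pt 0 0)) +
        y • pt (-(‖pt l 0 - pt 0 0‖⁻¹ • (pt l 0 - pt 0 0)) 1)
              ((‖pt l 0 - pt 0 0‖⁻¹ • (pt l 0 - pt 0 0)) 0) = pt x y := by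
    intro x y
    rw [hnorm]
    ext i; fin_cases i <;> simp [pt, hl.ne']
  have hmem : ∀ x y : ℝ,
      (pt x y ∈ segment ℝ a b ∧ 0 ≤ y) ↔ pt x y ∈ segment ℝ (pt x₁ y₁) (pt x₂ y₂) := by
    intro x y
    constructor
    · rintro ⟨hm, hy⟩
      rw [← hcap]
      exact ⟨hm, by simpa [pt] using hy⟩
    · intro hmS
      have h2 : pt x y ∈ segment ℝ a b ∩ {z : Pt | 0 ≤ z 1} := hcap ▸ hmS
      exact ⟨h2.1, by simpa [pt] using h2.2⟩
  have hproj : ∀ x : ℝ,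
      (∃ y : ℝ, pt x y ∈ segment ℝ (pt x₁ y₁) (pt x₂ y₂)) ↔
        x ∈ Set.Icc (min x₁ x₂) (max x₁ x₂) := by
    intro x
    constructor
    · rintro ⟨y, s, t, hs, ht, hst, heq⟩
      have hx : s * x₁ + t * x₂ = x := by
        have := congrArg (fun v : Pt => v (0 : Fin 2)) heq
        simpa [pt, PiLp.add_apply, PiLp.smul_apply] using this
      have : x ∈ segment ℝ x₁ x₂ := ⟨s, t, hs, ht, hst, hx⟩
      rwa [segment_eq_uIcc, Set.uIcc] at this
    · intro hx
      have : x ∈ segment ℝ x₁ x₂ := by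
        rwa [segment_eq_uIcc, Set.uIcc]
      obtain ⟨s, t, hs, ht, hst, hx'⟩ := this
      refine ⟨s * y₁ + t * y₂, s, t, hs, ht, hst, ?_⟩
      ext i; fin_cases i <;>
        simp [pt, PiLp.add_apply, PiLp.smul_apply, smul_eq_mul, ← hx']
  rw [dplus, if_neg hne]
  have hset : {x : ℝ | x ∈ Set.Icc (0 : ℝ) (dist (pt 0 0) (pt l 0)) ∧
      ∃ y : ℝ, 0 ≤ y ∧
        pt 0 0 + x • (‖pt l 0 - pt 0 0‖⁻¹ • (pt l 0 - pt 0 0)) +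
            y • pt (-(‖pt l 0 - pt 0 0‖⁻¹ • (pt l 0 - pt 0 0)) 1)
              ((‖pt l 0 - pt 0 0‖⁻¹ • (pt l 0 - pt 0 0)) 0)
          ∈ segment ℝ a b} = Set.Icc 0 l ∩ Set.Icc (min x₁ x₂) (max x₁ x₂) := by
    ext x
    simp only [Set.mem_setOf_eq, hdist, hframe, Set.mem_inter_iff]
    constructor
    · rintro ⟨hx, y, hy, hm⟩
      exact ⟨hx, (hproj x).1 ⟨y, (hmem x y).1 ⟨hm, hy⟩⟩⟩
    · rintro ⟨hx, hx'⟩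
      obtain ⟨y, hyS⟩ := (hproj x).2 hx'
      obtain ⟨hm, hy⟩ := (hmem x y).2 hyS
      exact ⟨hx, y, hy, hm⟩
  rw [hset, Set.Icc_inter_Icc, Real.volume_Icc, ENNReal.toReal_ofReal']
  simpa [max_comm] using clamp_arith l x₁ x₂ hl
end
end

section
/- For any linkage L, the set of noncrossing configurations satisfies IGConf₀(L) = ⋂_{n=1}^∞ closure(Annot_L(NConf_{1/n}(L))). -/
open MeasureTheory Filter Topology Set

noncomputable section
open scoped Classical

/-- A linkage: a finite graph given by an edge-index type `E` with endpoint maps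
`fst, snd : E → V` (this also fixes an orientation of each edge), together with a
nonnegative length for each edge (bar). -/
structure Linkage (V E : Type) where
  fst : E → V
  snd : E → V
  len : E → ℝ
  len_nonneg : ∀ e, 0 ≤ len e

variable {V E : Type}

/-- The set `Conf₀(L)` of configurations of a linkage: maps `C : V → ℝ²` realizing
every edge length exactly. -/
def ConfSet (L : Linkage V E) : Set (V → Pt) :=
  {C | ∀ e : E, dist (C (L.fst e)) (C (L.snd e)) = L.len e}

/-- Configurations of linkages `ε`-related to `L`: each bar length is realized within
`ε` of its length in `L`. -/
def ConfRel (L : Linkage V E) (ε : ℝ) : Set (V → Pt) :=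
  {C | ∀ e : E, |dist (C (L.fst e)) (C (L.snd e)) - L.len e| ≤ ε}

/-- The closed segment (bar) assigned to edge `e` by the configuration `C`. -/
def Seg (L : Linkage V E) (C : V → Pt) (e : E) : Set Pt :=
  segment ℝ (C (L.fst e)) (C (L.snd e))

/-- Two vertices are joined by a path of zero-length bars (bars whose endpoints coincide
under the configuration `C`). -/
def ZeroJoined (L : Linkage V E) (C : V → Pt) : V → V → Prop :=
  Relation.ReflTransGen fun u v =>
    (∃ e : E, (L.fst e = u ∧ L.snd e = v) ∨ (L.fst e = v ∧ L.snd e = u)) ∧ C u = C v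

/-- A configuration is nontouching if no two bars intersect except at shared endpoints,
and two vertices are mapped to the same point if and only if they are joined by a path of
zero-length bars. -/
def Nontouching (L : Linkage V E) (C : V → Pt) : Prop :=
  (∀ u v : V, C u = C v ↔ ZeroJoined L C u v) ∧
  (∀ e f : E, e ≠ f → ∀ z ∈ Seg L C e ∩ Seg L C f,
    (∃ u : V, (L.fst e = u ∨ L.snd e = u) ∧ C u = z) ∧
    (∃ v : V, (L.fst f = v ∨ L.snd f = v) ∧ C v = z))

/-- `NConf_ε(L)`: the nontouching configurations of linkages `ε`-related to `L`. -/
def NConf (L : Linkage V E) (ε : ℝ) : Set (V → Pt) :=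
  {C | C ∈ ConfRel L ε ∧ Nontouching L C}

/-- The annotation function `Annot_L`, sending a map `C : V → ℝ²` to the pair `(C, A)`
where `A i j = Ord(C(eᵢ), C(eⱼ))`. -/
def Annot (L : Linkage V E) (C : V → Pt) : (V → Pt) × (E → E → ℝ) :=
  (C, fun i j => ordFn (C (L.fst i)) (C (L.snd i)) (C (L.fst j)) (C (L.snd j)))

/-- The space `IGConf₀(L)` of noncrossing configurations of `L`:
`(Conf₀(L) × ℝ^{E×E}) ∩ closure (Annot_L(NConf₁(L)))`. -/
def IGConf (L : Linkage V E) : Set ((V → Pt) × (E → E → ℝ)) :=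
  (ConfSet L ×ˢ (Set.univ : Set (E → E → ℝ))) ∩ closure (Annot L '' NConf L 1)

/-- For any linkage `L`, the set of noncrossing configurations satisfies
`IGConf₀(L) = ⋂_{n=1}^∞ closure(Annot_L(NConf_{1/n}(L)))`. -/
theorem igconf_eq_iInter [Fintype V] [Fintype E] (L : Linkage V E) :
    IGConf L = ⋂ (n : ℕ) (_ : 1 ≤ n), closure (Annot L '' NConf L (1 / (n : ℝ))) := by
  apply Set.Subset.antisymm
  · intro x hx
    obtain ⟨⟨hC, -⟩, hcl⟩ := hx
    simp only [Set.mem_iInter]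
    intro n hn
    have hnpos : (0 : ℝ) < n := by exact_mod_cast (by omega : 0 < n)
    rw [Metric.mem_closure_iff] at hcl ⊢
    intro ε hε
    have hδpos : 0 < min ε (1 / (2 * n)) := by
      refine lt_min hε (by positivity)
    obtain ⟨y, hy, hdy⟩ := hcl _ hδpos
    obtain ⟨D, hD, rfl⟩ := hy
    refine ⟨Annot L D, ⟨D, ⟨?_, hD.2⟩, rfl⟩, lt_of_lt_of_le hdy (min_le_left _ _)⟩
    intro e
    have hfst : dist x.1 (Annot L D).1 ≤ dist x (Annot L D) := le_max_left _ _
    have hvert : ∀ u : V, dist (x.1 u) (D u) < min ε (1 / (2 * n)) := fun u =>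
      lt_of_le_of_lt (le_trans (dist_le_pi_dist x.1 (Annot L D).1 u) hfst) hdy
    have h1 : |dist (D (L.fst e)) (D (L.snd e)) - L.len e| ≤
        dist (D (L.fst e)) (x.1 (L.fst e)) + dist (D (L.snd e)) (x.1 (L.snd e)) := by
      rw [← hC e, ← Real.dist_eq]
      exact dist_dist_dist_le _ _ _ _
    have h2 : dist (D (L.fst e)) (x.1 (L.fst e)) + dist (D (L.snd e)) (x.1 (L.snd e)) ≤
        1 / n := by
      have ha : dist (D (L.fst e)) (x.1 (L.fst e)) ≤ 1 / (2 * (n : ℝ)) := by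
        rw [dist_comm]; exact le_of_lt (lt_of_lt_of_le (hvert (L.fst e)) (min_le_right _ _))
      have hb : dist (D (L.snd e)) (x.1 (L.snd e)) ≤ 1 / (2 * (n : ℝ)) := by
        rw [dist_comm]; exact le_of_lt (lt_of_lt_of_le (hvert (L.snd e)) (min_le_right _ _))
      calc dist (D (L.fst e)) (x.1 (L.fst e)) + dist (D (L.snd e)) (x.1 (L.snd e))
          ≤ 1 / (2 * n) + 1 / (2 * n) := add_le_add ha hb
        _ = 1 / n := by
          have hne : (n:ℝ) ≠ 0 := ne_of_gt hnpos
          field_simp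
          norm_num
    exact le_trans h1 h2
  · intro x hx
    simp only [Set.mem_iInter] at hx
    refine ⟨⟨?_, trivial⟩, by simpa using hx 1 le_rfl⟩
    intro e
    have key : ∀ n : ℕ, 1 ≤ n →
        |dist (x.1 (L.fst e)) (x.1 (L.snd e)) - L.len e| ≤ 1 / (n : ℝ) := by
      intro n hn
      have hmem := hx n hn
      have hclosed : IsClosed {y : (V → Pt) × (E → E → ℝ) |
          |dist (y.1 (L.fst e)) (y.1 (L.snd e)) - L.len e| ≤ 1 / (n : ℝ)} := by
        apply isClosed_le _ continuous_const
        exact (continuous_abs.comp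
          ((((continuous_apply (L.fst e)).comp continuous_fst).dist
            ((continuous_apply (L.snd e)).comp continuous_fst)).sub continuous_const))
      have hsub : Annot L '' NConf L (1 / (n : ℝ)) ⊆ {y : (V → Pt) × (E → E → ℝ) |
          |dist (y.1 (L.fst e)) (y.1 (L.snd e)) - L.len e| ≤ 1 / (n : ℝ)} := by
        rintro y ⟨D, hD, rfl⟩
        exact hD.1 e
      exact closure_minimal hsub hclosed hmem
    have habs : |dist (x.1 (L.fst e)) (x.1 (L.snd e)) - L.len e| ≤ 0 := by
      by_contra h
      push_neg at h
      obtain ⟨n, hnlt⟩ := exists_nat_one_div_lt h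
      have := key (n + 1) (by omega)
      rw [Nat.cast_add, Nat.cast_one] at this
      linarith
    have := abs_nonneg (dist (x.1 (L.fst e)) (x.1 (L.snd e)) - L.len e)
    have h0 : dist (x.1 (L.fst e)) (x.1 (L.snd e)) - L.len e = 0 := by
      rw [← abs_eq_zero]; linarith
    linarith
end
end

section
/- For any linkage L and any ε with 0 < ε ≤ 1, one has IGConf₀(L) = (Conf₀(L) × ℝ^{E(G)×E(G)}) ∩ closure(Annot_L(NConf_ε(L))); that is, replacing 1 by any positive ε ≤ 1 in the definition of noncrossing configurations yields the same set. -/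
open MeasureTheory Filter Topology Set

noncomputable section
open scoped Classical

variable {V E : Type}

/-- For any linkage `L` and any `ε` with `0 < ε ≤ 1`,
`IGConf₀(L) = (Conf₀(L) × ℝ^{E×E}) ∩ closure(Annot_L(NConf_ε(L)))`; that is, replacing `1`
by any positive `ε ≤ 1` in the definition of noncrossing configurations yields the same
set. -/
theorem igconf_eq_of_eps [Fintype V] [Fintype E] (L : Linkage V E) (ε : ℝ)
    (hε₀ : 0 < ε) (hε₁ : ε ≤ 1) :
    IGConf L =
      (ConfSet L ×ˢ (Set.univ : Set (E → E → ℝ))) ∩ closure (Annot L '' NConf L ε) := by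
  apply Set.Subset.antisymm
  · rintro ⟨C, A⟩ ⟨hC, hcl⟩
    refine ⟨hC, ?_⟩
    rw [mem_closure_iff_seq_limit] at hcl
    obtain ⟨x, hx, hlim⟩ := hcl
    choose D hD hDx using hx
    have hCconf : C ∈ ConfSet L := hC.1
    have hDlim : Tendsto D atTop (𝓝 C) := by
      have h1 : Tendsto (fun n => (x n).1) atTop (𝓝 C) :=
        (continuous_fst.tendsto _).comp hlim
      have : (fun n => (x n).1) = D := by
        funext n; rw [← hDx n]; rfl
      rwa [this] at h1
    have hvert : ∀ v : V, Tendsto (fun n => D n v) atTop (𝓝 (C v)) := by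
      intro v
      exact (tendsto_pi_nhds.1 hDlim) v
    have hev : ∀ᶠ n in atTop, ∀ e : E,
        |dist (D n (L.fst e)) (D n (L.snd e)) - L.len e| ≤ ε := by
      rw [eventually_all]
      intro e
      have hd : Tendsto (fun n => dist (D n (L.fst e)) (D n (L.snd e))) atTop
          (𝓝 (L.len e)) := by
        have := ((hvert (L.fst e)).dist (hvert (L.snd e)))
        rwa [hCconf e] at this
      have : ∀ᶠ z in 𝓝 (L.len e), |z - L.len e| ≤ ε := by
        have : Metric.closedBall (L.len e) ε ∈ 𝓝 (L.len e) :=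
          Metric.closedBall_mem_nhds _ hε₀
        filter_upwards [this] with z hz
        simpa [Real.dist_eq] using hz
      exact hd.eventually this
    refine mem_closure_of_tendsto hlim ?_
    filter_upwards [hev] with n hn
    exact ⟨D n, ⟨hn, (hD n).2⟩, hDx n⟩
  · rintro ⟨C, A⟩ ⟨hC, hcl⟩
    refine ⟨hC, ?_⟩
    refine closure_mono (Set.image_mono (f := Annot L) ?_) hcl
    rintro D ⟨hrel, hnt⟩
    exact ⟨fun e => le_trans (hrel e) hε₁, hnt⟩
end
end

section
/- Let L be a linkage whose graph G is connected, let ε ≥ 0, and fix a vertex v₀ ∈ V(G). Then the set {(C,A) ∈ closure(Annot_L(NConf_ε(L))) : C(v₀) = 0} is a compact subset of (ℝ²)^{V(G)} × ℝ^{E(G)×E(G)}. -/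
open MeasureTheory Filter Topology Set

noncomputable section
open scoped Classical

variable {V E : Type}

/-- The graph of the linkage `L` is connected: any two vertices are joined by a walk. -/
def GraphConnected (L : Linkage V E) : Prop :=
  ∀ u v : V, Relation.ReflTransGen
    (fun a b => ∃ e : E, (L.fst e = a ∧ L.snd e = b) ∨ (L.fst e = b ∧ L.snd e = a)) u v

lemma aux_toReal_le (d : ℝ) (hd : 0 ≤ d) (s : Set ℝ) (hs : s ⊆ Set.Icc 0 d) :
    (volume s).toReal ≤ d := by
  have h1 : volume s ≤ volume (Set.Icc (0:ℝ) d) := measure_mono hs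
  rw [Real.volume_Icc] at h1
  have h2 : (volume s).toReal ≤ (ENNReal.ofReal (d - 0)).toReal :=
    ENNReal.toReal_mono (by simp) h1
  rw [ENNReal.toReal_ofReal (by linarith)] at h2
  linarith

lemma dplus_nonneg (p q r s : Pt) : 0 ≤ dplus p q r s := by
  unfold dplus; split <;> simp [ENNReal.toReal_nonneg]

lemma dminus_nonneg (p q r s : Pt) : 0 ≤ dminus p q r s := by
  unfold dminus; split <;> simp [ENNReal.toReal_nonneg]

lemma dplus_le (p q r s : Pt) : dplus p q r s ≤ dist p q := by
  unfold dplus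
  split
  · next h => simp [h]
  · exact aux_toReal_le _ dist_nonneg _ (fun x hx => hx.1)

lemma dminus_le (p q r s : Pt) : dminus p q r s ≤ dist p q := by
  unfold dminus
  split
  · next h => simp [h]
  · exact aux_toReal_le _ dist_nonneg _ (fun x hx => hx.1)

lemma abs_ordFn_le (p q r s : Pt) : |ordFn p q r s| ≤ dist p q := by
  have h1 := dplus_nonneg p q r s
  have h2 := dminus_nonneg p q r s
  have h3 := dplus_le p q r s
  have h4 := dminus_le p q r s
  rw [ordFn, abs_sub_le_iff]
  constructor <;> linarith

/-- Let `L` be a linkage whose graph is connected, let `ε ≥ 0`, and fix a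
vertex `v₀`.  Then `{(C,A) ∈ closure(Annot_L(NConf_ε(L))) : C(v₀) = 0}` is a compact
subset of `(ℝ²)^V × ℝ^{E×E}`. -/
theorem closure_annot_pinned_isCompact [Fintype V] [Fintype E] (L : Linkage V E)
    (hconn : GraphConnected L) (ε : ℝ) (hε : 0 ≤ ε) (v₀ : V) :
    IsCompact {x : (V → Pt) × (E → E → ℝ) |
      x ∈ closure (Annot L '' NConf L ε) ∧ x.1 v₀ = 0} := by
  set T := Annot L '' NConf L ε with hT
  set Bsum : ℝ := ∑ e : E, (L.len e + ε) with hBsum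
  have hBnn : ∀ e : E, 0 ≤ L.len e + ε := fun e => add_nonneg (L.len_nonneg e) hε
  have hBsum0 : 0 ≤ Bsum := Finset.sum_nonneg fun e _ => hBnn e
  have hBle : ∀ e : E, L.len e + ε ≤ Bsum := fun e =>
    Finset.single_le_sum (fun i _ => hBnn i) (Finset.mem_univ e)
  have hdistle : ∀ C ∈ ConfRel L ε, ∀ e : E,
      dist (C (L.fst e)) (C (L.snd e)) ≤ L.len e + ε := by
    intro C hC e
    have := hC e
    rw [abs_sub_le_iff] at this
    linarith [this.1]
  -- Step 2 : uniform bound on dist (C u) (C v₀)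
  have step2 : ∀ u : V, ∃ M : ℝ, 0 ≤ M ∧ ∀ C ∈ ConfRel L ε, dist (C u) (C v₀) ≤ M := by
    intro u
    induction hconn v₀ u with
    | refl => exact ⟨0, le_refl 0, fun C _ => by simp⟩
    | @tail b c _ hbc ih =>
      obtain ⟨M, hM0, hM⟩ := ih
      refine ⟨M + Bsum, by linarith, fun C hC => ?_⟩
      obtain ⟨e, he⟩ := hbc
      have hdbc : dist (C c) (C b) ≤ Bsum := by
        rcases he with ⟨h1, h2⟩ | ⟨h1, h2⟩
        · rw [dist_comm, ← h1, ← h2]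
          exact (hdistle C hC e).trans (hBle e)
        · rw [← h1, ← h2]
          exact (hdistle C hC e).trans (hBle e)
      calc dist (C c) (C v₀) ≤ dist (C c) (C b) + dist (C b) (C v₀) := dist_triangle _ _ _
        _ ≤ Bsum + M := add_le_add hdbc (hM C hC)
        _ = M + Bsum := by ring
  choose M hM0 hMd using step2
  set Mtot : ℝ := ∑ u : V, M u with hMtot
  have hMle : ∀ u : V, M u ≤ Mtot := fun u =>
    Finset.single_le_sum (fun i _ => hM0 i) (Finset.mem_univ u)
  -- closed set containing T
  set K0 : Set ((V → Pt) × (E → E → ℝ)) :=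
    {x | ∀ v : V, dist (x.1 v) (x.1 v₀) ≤ Mtot} ∩ {x | ∀ i j : E, |x.2 i j| ≤ Bsum}
    with hK0
  have hK0closed : IsClosed K0 := by
    apply IsClosed.inter
    · have : {x : (V → Pt) × (E → E → ℝ) | ∀ v : V, dist (x.1 v) (x.1 v₀) ≤ Mtot}
          = ⋂ v : V, {x | dist (x.1 v) (x.1 v₀) ≤ Mtot} := by
        ext x; simp
      rw [this]
      refine isClosed_iInter fun v => isClosed_le ?_ continuous_const
      exact Continuous.dist ((continuous_apply v).comp continuous_fst)
        ((continuous_apply v₀).comp continuous_fst)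
    · have : {x : (V → Pt) × (E → E → ℝ) | ∀ i j : E, |x.2 i j| ≤ Bsum}
          = ⋂ i : E, ⋂ j : E, {x | |x.2 i j| ≤ Bsum} := by
        ext x; simp
      rw [this]
      refine isClosed_iInter fun i => isClosed_iInter fun j =>
        isClosed_le ?_ continuous_const
      exact (((continuous_apply j).comp ((continuous_apply i).comp continuous_snd))).abs
  have hTK0 : T ⊆ K0 := by
    rintro x ⟨C, hC, rfl⟩
    constructor
    · intro v
      exact (hMd v C hC.1).trans (hMle v)
    · intro i j
      refine (abs_ordFn_le _ _ _ _).trans ?_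
      exact (hdistle C hC.1 i).trans (hBle i)
  have hclK0 : closure T ⊆ K0 := closure_minimal hTK0 hK0closed
  -- compact superset
  have hKc : IsCompact ((Set.univ.pi fun _ : V => Metric.closedBall (0:Pt) Mtot) ×ˢ
      (Set.univ.pi fun _ : E => Set.univ.pi fun _ : E => Metric.closedBall (0:ℝ) Bsum)) :=
    (isCompact_univ_pi fun _ => isCompact_closedBall _ _).prod
      (isCompact_univ_pi fun _ => isCompact_univ_pi fun _ => isCompact_closedBall _ _)
  refine IsCompact.of_isClosed_subset hKc ?_ ?_
  · have : {x : (V → Pt) × (E → E → ℝ) | x ∈ closure T ∧ x.1 v₀ = 0}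
        = closure T ∩ {x | x.1 v₀ = 0} := rfl
    rw [this]
    exact isClosed_closure.inter
      (isClosed_eq ((continuous_apply v₀).comp continuous_fst) continuous_const)
  · rintro x ⟨hx, hx0⟩
    have hx' := hclK0 hx
    constructor
    · intro v _
      have := hx'.1 v
      rw [hx0] at this
      simpa [Metric.mem_closedBall] using this
    · intro i _ j _
      have := hx'.2 i j
      simpa [Metric.mem_closedBall, Real.dist_eq] using this
end
end
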